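/- Let K be a field with a valuation v, let r be a positive rational, and let M be an n×n matrix over K such that (a) for each 1 ≤ m ≤ n, the leading principal m×m minor det(Mₘ) has valuation r·m(m+1)/2, and (b) every entry in column j has valuation at least r·j. Write det(1 − tM) = ∑_{i=0}^n cᵢ tⁱ. Then for every 1 ≤ m ≤ n, v(cₘ) = r·m(m+1)/2. -/

import Mathlib

open Polynomial Matrix
section Val
variable {K : Type*} [Field K] {v : K → WithTop ℚ}
  (hv0 : ∀ x : K, v x = ⊤ ↔ x = 0)
  (hvmul : ∀ x y : K, v (x * y) = v x + v y)
  (hvadd : ∀ x y : K, min (v x) (v y) ≤ v (x + y))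
include hv0 hvmul

lemma val_one' : v 1 = 0 := by
  have h := hvmul 1 1
  rw [mul_one] at h
  cases hv : v 1 with
  | top => exact absurd ((hv0 1).mp hv) one_ne_zero
  | coe q =>
    rw [hv] at h
    have : q = q + q := by exact_mod_cast h
    have : q = 0 := by linarith
    simp [this]

lemma val_neg' (x : K) : v (-x) = v x := by
  have hm1 : v (-1 : K) = 0 := by
    have h := hvmul (-1 : K) (-1)
    rw [neg_mul_neg, one_mul, val_one' hv0 hvmul] at h
    cases hv : v (-1 : K) with
    | top => simp [hv] at h
    | coe q =>
      rw [hv] at h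
      have hq : q + q = 0 := by exact_mod_cast h.symm
      have : q = 0 := by linarith
      simp [this]
  rw [← neg_one_mul, hvmul, hm1, zero_add]

omit hvmul in
lemma val_zero' : v (0 : K) = ⊤ := (hv0 0).mpr rfl

include hvadd in
lemma val_sum_le {ι : Type*} (t : Finset ι) (f : ι → K) (c : WithTop ℚ)
    (h : ∀ i ∈ t, c ≤ v (f i)) : c ≤ v (∑ i ∈ t, f i) := by
  classical
  induction t using Finset.induction_on with
  | empty => simp [val_zero' hv0]
  | @insert a s hx ih =>
    rw [Finset.sum_insert hx]
    refine le_trans ?_ (hvadd _ _)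
    exact le_min (h a (Finset.mem_insert_self a s))
      (ih fun i hi => h i (Finset.mem_insert_of_mem hi))

include hvadd in
lemma val_add_eq_left (x y : K) (h : v x < v y) : v (x + y) = v x := by
  have h1 : v x ≤ v (x + y) := by
    have := hvadd x y
    rwa [min_eq_left h.le] at this
  have h2 : v (x + y) ≤ v x := by
    have := hvadd (x + y) (-y)
    rw [add_neg_cancel_right, val_neg' hv0 hvmul] at this
    rcases min_le_iff.mp this with h' | h'
    · exact h'
    · exact absurd h' (not_le.mpr h)
  exact le_antisymm h2 h1

lemma val_prod' {ι : Type*} (t : Finset ι) (f : ι → K) :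
    v (∏ i ∈ t, f i) = ∑ i ∈ t, v (f i) := by
  classical
  induction t using Finset.induction_on with
  | empty => simp [val_one' hv0 hvmul]
  | @insert a s hx ih =>
    rw [Finset.prod_insert hx, Finset.sum_insert hx, hvmul, ih]
end Val


lemma det_piecewise_one {R : Type*} [CommRing R] {n : ℕ} (N : Matrix (Fin n) (Fin n) R)
    (s : Finset (Fin n)) :
    (Matrix.of (s.piecewise (N : Fin n → Fin n → R) (1 : Matrix (Fin n) (Fin n) R))).det
      = (N.submatrix ((↑) : {i // i ∈ s} → Fin n) ((↑) : {i // i ∈ s} → Fin n)).det := by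
  classical
  let e : {i // i ∈ s} ⊕ {i // i ∉ s} ≃ Fin n := Equiv.sumCompl (· ∈ s)
  rw [← Matrix.det_submatrix_equiv_self e]
  have he : (Matrix.of (s.piecewise (N : Fin n → Fin n → R) (1 : Matrix (Fin n) (Fin n) R))).submatrix e e =
      Matrix.fromBlocks (N.submatrix (↑) (↑))
        (N.submatrix ((↑) : {i // i ∈ s} → Fin n) ((↑) : {i // i ∉ s} → Fin n)) 0 1 := by
    ext i j
    cases i with
    | inl a =>
      cases j with
      | inl b => simp [e, Finset.piecewise, a.2]
      | inr b => simp [e, Finset.piecewise, a.2]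
    | inr a =>
      cases j with
      | inl b =>
        have : (a : Fin n) ≠ (b : Fin n) := fun h => a.2 (h ▸ b.2)
        simp [e, Finset.piecewise, a.2, Matrix.one_apply, this]
      | inr b =>
        by_cases hab : (a : Fin n) = (b : Fin n)
        · have : a = b := Subtype.ext hab
          simp [e, Finset.piecewise, a.2, b.2, Matrix.one_apply, this]
        · have : a ≠ b := fun h => hab (congrArg _ h)
          simp [e, Finset.piecewise, a.2, Matrix.one_apply, hab, this]
  rw [he, Matrix.det_fromBlocks_zero₂₁, Matrix.det_one, mul_one]

lemma det_one_add_smul_eq_sum {S : Type*} [CommRing S] {n : ℕ} (c : S)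
    (N : Matrix (Fin n) (Fin n) S) :
    (1 + c • N).det = ∑ s : Finset (Fin n), c ^ s.card *
      (N.submatrix ((↑) : {i // i ∈ s} → Fin n) ((↑) : {i // i ∈ s} → Fin n)).det := by
  classical
  have h0 : (1 + c • N : Matrix (Fin n) (Fin n) S) =
      Matrix.of (((c • N : Matrix (Fin n) (Fin n) S) : Fin n → Fin n → S) +
        ((1 : Matrix (Fin n) (Fin n) S) : Fin n → Fin n → S)) := by
    ext i j; simp [add_comm]; rfl
  rw [h0]
  have := (Matrix.detRowAlternating (R := S) (n := Fin n)).toMultilinearMap.map_add_univ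
    ((c • N : Matrix (Fin n) (Fin n) S) : Fin n → Fin n → S)
    ((1 : Matrix (Fin n) (Fin n) S) : Fin n → Fin n → S)
  refine this.trans (Finset.sum_congr rfl fun s _ => ?_)
  have hpw : s.piecewise ((c • N : Matrix (Fin n) (Fin n) S) : Fin n → Fin n → S)
        ((1 : Matrix (Fin n) (Fin n) S) : Fin n → Fin n → S) =
      s.piecewise (fun i => c • (s.piecewise (N : Fin n → Fin n → S)
          ((1 : Matrix (Fin n) (Fin n) S) : Fin n → Fin n → S) i))
        (s.piecewise (N : Fin n → Fin n → S)
          ((1 : Matrix (Fin n) (Fin n) S) : Fin n → Fin n → S)) := by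
    ext i j
    by_cases hi : i ∈ s <;> simp [Finset.piecewise, hi]
  rw [hpw]
  have := (Matrix.detRowAlternating (R := S) (n := Fin n)).toMultilinearMap.map_piecewise_smul
    (fun _ => c) (s.piecewise (N : Fin n → Fin n → S)
      ((1 : Matrix (Fin n) (Fin n) S) : Fin n → Fin n → S)) s
  rw [this, Finset.prod_const, smul_eq_mul]
  congr 1
  exact det_piecewise_one N s

lemma coeff_det_one_sub_X_smul {R : Type*} [CommRing R] {n : ℕ}
    (M : Matrix (Fin n) (Fin n) R) (m : ℕ) :
    ((1 - (X : R[X]) • M.map C).det).coeff m =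
      ∑ s ∈ Finset.univ.filter (fun s : Finset (Fin n) => s.card = m),
        (-1 : R) ^ m *
          (M.submatrix ((↑) : {i // i ∈ s} → Fin n) ((↑) : {i // i ∈ s} → Fin n)).det := by
  classical
  have h1 : (1 - (X : R[X]) • M.map C) = 1 + (-X : R[X]) • M.map C := by
    rw [neg_smul, ← sub_eq_add_neg]
  rw [h1, det_one_add_smul_eq_sum, Polynomial.finset_sum_coeff]
  have h2 : ∀ s : Finset (Fin n),
      (-X : R[X]) ^ s.card *
          ((M.map C).submatrix ((↑) : {i // i ∈ s} → Fin n) ((↑) : {i // i ∈ s} → Fin n)).det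
        = C ((-1 : R) ^ s.card *
            (M.submatrix ((↑) : {i // i ∈ s} → Fin n) ((↑) : {i // i ∈ s} → Fin n)).det)
          * X ^ s.card := by
    intro s
    have hsub : ((M.map C).submatrix ((↑) : {i // i ∈ s} → Fin n) ((↑) : {i // i ∈ s} → Fin n))
        = (M.submatrix ((↑) : {i // i ∈ s} → Fin n) ((↑) : {i // i ∈ s} → Fin n)).map C := rfl
    rw [hsub]
    have : ((M.submatrix ((↑) : {i // i ∈ s} → Fin n) ((↑) : {i // i ∈ s} → Fin n)).map C).det
        = C ((M.submatrix ((↑) : {i // i ∈ s} → Fin n) ((↑) : {i // i ∈ s} → Fin n)).det) :=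
      (RingHom.map_det C _).symm
    rw [this, _root_.map_mul, map_pow, map_neg, _root_.map_one, neg_pow (X : R[X])]
    ring
  rw [Finset.sum_congr rfl fun s _ => by rw [h2 s, Polynomial.coeff_C_mul_X_pow]]
  rw [Finset.sum_filter]
  refine Finset.sum_congr rfl fun s _ => ?_
  by_cases h : s.card = m
  · simp [h]
  · simp [h, Ne.symm h]


-- strict mono Fin m → ℕ satisfies k ≤ f k
lemma strictMono_fin_le {m : ℕ} {f : Fin m → ℕ} (hf : StrictMono f) (k : Fin m) :
    k.1 ≤ f k := by
  rcases k with ⟨j, hj⟩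
  induction j with
  | zero => exact Nat.zero_le _
  | succ i ih =>
    have hi : i < m := Nat.lt_of_succ_lt hj
    have h1 : f ⟨i, hi⟩ < f ⟨i + 1, hj⟩ := hf (by simp [Fin.lt_def])
    have h2 : i ≤ f ⟨i, hi⟩ := ih hi
    have h3 : ((⟨i + 1, hj⟩ : Fin m) : ℕ) = i + 1 := rfl
    omega

lemma weight_ge {n m : ℕ} (s : Finset (Fin n)) (hs : s.card = m) :
    (∑ k ∈ Finset.range m, (k + 1)) ≤ ∑ i ∈ s, (i.1 + 1) := by
  classical
  have hmono : StrictMono (fun k : Fin m => (s.orderEmbOfFin hs k).1) :=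
    fun a b hab => (s.orderEmbOfFin hs).strictMono hab
  calc (∑ k ∈ Finset.range m, (k + 1)) = ∑ k : Fin m, (k.1 + 1) := by
        rw [Finset.sum_range fun k => k + 1]
    _ ≤ ∑ k : Fin m, ((s.orderEmbOfFin hs k).1 + 1) :=
        Finset.sum_le_sum fun k _ => by
          have := strictMono_fin_le hmono k; omega
    _ = ∑ i ∈ s, (i.1 + 1) := by
        rw [← Finset.sum_coe_sort s (fun i => i.1 + 1)]
        exact Fintype.sum_equiv (s.orderIsoOfFin hs).toEquiv _ _ (fun k => by
          simp [Finset.coe_orderIsoOfFin_apply])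

lemma weight_eq_iff {n m : ℕ} (s : Finset (Fin n)) (hs : s.card = m)
    (heq : (∑ i ∈ s, (i.1 + 1)) = ∑ k ∈ Finset.range m, (k + 1)) :
    s = Finset.univ.filter (fun i : Fin n => i.1 < m) := by
  classical
  set g := s.orderEmbOfFin hs with hg
  have hmono : StrictMono (fun k : Fin m => (g k).1) :=
    fun a b hab => g.strictMono hab
  have hsum : ∑ k : Fin m, ((g k).1 + 1) = ∑ k : Fin m, (k.1 + 1) := by
    have h1 : ∑ k : Fin m, ((g k).1 + 1) = ∑ i ∈ s, (i.1 + 1) := by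
      rw [← Finset.sum_coe_sort s (fun i => i.1 + 1)]
      exact Fintype.sum_equiv (s.orderIsoOfFin hs).toEquiv _ _ (fun k => by
        simp [hg, Finset.coe_orderIsoOfFin_apply])
    rw [h1, heq, Finset.sum_range fun k => k + 1]
  have hpt : ∀ k : Fin m, (g k).1 = k.1 := by
    have := (Finset.sum_eq_sum_iff_of_le (s := (Finset.univ : Finset (Fin m)))
      (f := fun k => k.1 + 1) (g := fun k => (g k).1 + 1)
      (fun k _ => by show k.1 + 1 ≤ (g k).1 + 1; have := strictMono_fin_le hmono k; omega)).mp hsum.symm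
    intro k
    have h' := this k (Finset.mem_univ k)
    have h'' : k.1 + 1 = (g k).1 + 1 := h'
    omega
  ext i
  simp only [Finset.mem_filter, Finset.mem_univ, true_and]
  constructor
  · intro hi
    have : i ∈ Set.range g := by rw [Finset.range_orderEmbOfFin]; exact hi
    obtain ⟨k, hk⟩ := this
    rw [← hk]
    rw [hpt k]
    exact k.2
  · intro hi
    have hk : g ⟨i.1, hi⟩ = i := Fin.ext (hpt ⟨i.1, hi⟩)
    rw [← hk]
    exact Finset.orderEmbOfFin_mem s hs _


section DetBound
variable {K : Type*} [Field K] {v : K → WithTop ℚ}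
  (hv0 : ∀ x : K, v x = ⊤ ↔ x = 0)
  (hvmul : ∀ x y : K, v (x * y) = v x + v y)
  (hvadd : ∀ x y : K, min (v x) (v y) ≤ v (x + y))

include hv0 hvmul hvadd in
lemma val_det_submatrix_ge {n : ℕ} (r : ℚ) (M : Matrix (Fin n) (Fin n) K)
    (hcol : ∀ i j : Fin n, ((r * ((j.1 + 1 : ℕ) : ℚ) : ℚ) : WithTop ℚ) ≤ v (M i j))
    (s : Finset (Fin n)) :
    ((r * ((∑ i ∈ s, (i.1 + 1) : ℕ) : ℚ) : ℚ) : WithTop ℚ) ≤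
      v ((M.submatrix ((↑) : {i // i ∈ s} → Fin n) ((↑) : {i // i ∈ s} → Fin n)).det) := by
  classical
  rw [Matrix.det_apply']
  refine val_sum_le hv0 hvmul hvadd _ _ _ (fun σ _ => ?_)
  have hεv : v (Equiv.Perm.sign σ * ∏ j : {i // i ∈ s}, M.submatrix
        ((↑) : {i // i ∈ s} → Fin n) ((↑) : {i // i ∈ s} → Fin n) (σ j) j)
      = v (∏ j : {i // i ∈ s}, M ((σ j : {i // i ∈ s}) : Fin n) (j : Fin n)) := by
    rcases Int.units_eq_one_or (Equiv.Perm.sign σ) with h | h <;> rw [h]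
    · norm_num
    · push_cast
      rw [neg_one_mul]
      exact val_neg' hv0 hvmul _
  rw [hεv, val_prod' hv0 hvmul]
  have hle : ∀ j : {i // i ∈ s},
      ((r * (((j : Fin n).1 + 1 : ℕ) : ℚ) : ℚ) : WithTop ℚ) ≤
        v (M ((σ j : {i // i ∈ s}) : Fin n) (j : Fin n)) :=
    fun j => hcol _ _
  calc ((r * ((∑ i ∈ s, (i.1 + 1) : ℕ) : ℚ) : ℚ) : WithTop ℚ)
      = ∑ j : {i // i ∈ s}, ((r * (((j : Fin n).1 + 1 : ℕ) : ℚ) : ℚ) : WithTop ℚ) := by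
        rw [← WithTop.coe_sum, ← Finset.mul_sum]
        congr 1
        congr 1
        rw [← Finset.sum_coe_sort s (fun i => (i.1 + 1 : ℕ))]
        push_cast
        ring
    _ ≤ ∑ j : {i // i ∈ s}, v (M ((σ j : {i // i ∈ s}) : Fin n) (j : Fin n)) :=
        Finset.sum_le_sum fun j _ => hle j
end DetBound


/-- Serre's proposition: if the leading principal `m×m` minors of `M` have valuation
`r·m(m+1)/2` and every entry in column `j` has valuation at least `r·j`, then the
coefficient `cₘ` of `tᵐ` in `det(1 - tM)` has valuation `r·m(m+1)/2`. -/
theorem serre_valuation_of_char_coeffs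
    (K : Type*) [Field K] (v : K → WithTop ℚ)
    (hv0 : ∀ x : K, v x = ⊤ ↔ x = 0)
    (hvmul : ∀ x y : K, v (x * y) = v x + v y)
    (hvadd : ∀ x y : K, min (v x) (v y) ≤ v (x + y))
    (r : ℚ) (hr : 0 < r) (n : ℕ) (M : Matrix (Fin n) (Fin n) K)
    (hminor : ∀ (m : ℕ) (h : m ≤ n), 1 ≤ m →
      v ((M.submatrix (Fin.castLE h) (Fin.castLE h)).det) =
        ((r * ((m * (m + 1) : ℚ) / 2) : ℚ) : WithTop ℚ))
    (hcol : ∀ i j : Fin n, ((r * ((j.1 + 1 : ℕ) : ℚ) : ℚ) : WithTop ℚ) ≤ v (M i j)) :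
    ∀ m : ℕ, 1 ≤ m → m ≤ n →
      v (((1 : Matrix (Fin n) (Fin n) (Polynomial K)) -
            (Polynomial.X : Polynomial K) • M.map Polynomial.C).det.coeff m) =
        ((r * ((m * (m + 1) : ℚ) / 2) : ℚ) : WithTop ℚ) := by
  classical
  intro m hm hmn
  rw [coeff_det_one_sub_X_smul M m]
  set V : ℚ := r * ((m * (m + 1) : ℚ) / 2) with hV
  set s₀ : Finset (Fin n) := Finset.univ.filter (fun i : Fin n => i.1 < m) with hs₀
  set d : Finset (Fin n) → K := fun s =>
    (M.submatrix ((↑) : {i // i ∈ s} → Fin n) ((↑) : {i // i ∈ s} → Fin n)).det with hd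
  -- cardinality of s₀
  have hs0map : s₀ = Finset.map ⟨Fin.castLE hmn, Fin.castLE_injective hmn⟩ Finset.univ := by
    ext i
    simp only [hs₀, Finset.mem_filter, Finset.mem_univ, true_and, Finset.mem_map,
      Function.Embedding.coeFn_mk]
    constructor
    · intro hi
      first
      | exact ⟨⟨i.1, hi⟩, Finset.mem_univ _, rfl⟩
      | exact ⟨⟨i.1, hi⟩, rfl⟩
    · first
      | (rintro ⟨k, -, rfl⟩; exact k.2)
      | (rintro ⟨k, rfl⟩; exact k.2)
  have hcard0 : s₀.card = m := by
    rw [hs0map, Finset.card_map, Finset.card_univ, Fintype.card_fin]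
  have hmem0 : s₀ ∈ Finset.univ.filter (fun s : Finset (Fin n) => s.card = m) := by
    simp [hcard0]
  -- the principal minor value
  have hval0 : v (d s₀) = (V : WithTop ℚ) := by
    let e0 : Fin m ≃ {i // i ∈ s₀} :=
      { toFun := fun k => ⟨Fin.castLE hmn k, by
          simp only [hs₀, Finset.mem_filter, Finset.mem_univ, true_and]
          exact k.2⟩
        invFun := fun i => ⟨i.1.1, by
          have := i.2
          simp only [hs₀, Finset.mem_filter, Finset.mem_univ, true_and] at this
          exact this⟩
        left_inv := fun k => rfl
        right_inv := fun i => Subtype.ext (Fin.val_injective rfl) }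
    have hsub : (M.submatrix ((↑) : {i // i ∈ s₀} → Fin n)
        ((↑) : {i // i ∈ s₀} → Fin n)).submatrix e0 e0 =
          M.submatrix (Fin.castLE hmn) (Fin.castLE hmn) := by
      ext i j; rfl
    have := Matrix.det_submatrix_equiv_self e0
      (M.submatrix ((↑) : {i // i ∈ s₀} → Fin n) ((↑) : {i // i ∈ s₀} → Fin n))
    rw [hsub] at this
    rw [hd]
    simp only []
    rw [← this]
    exact hminor m hmn hm
  -- Gauss sum
  set T : ℕ := ∑ k ∈ Finset.range m, (k + 1) with hT
  have hTQ : ((T : ℕ) : ℚ) = (m * (m + 1) : ℚ) / 2 := by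
    have h1 : (∑ i ∈ Finset.range (m + 1), i) * 2 = (m + 1) * m :=
      Finset.sum_range_id_mul_two (m + 1)
    have h2 : (∑ i ∈ Finset.range (m + 1), i) = T := by
      rw [Finset.sum_range_succ' _ m, hT]
      simp
    rw [h2] at h1
    have h4 := congrArg (fun x : ℕ => (x : ℚ)) h1
    push_cast at h4
    linarith
  -- v of each neg-one-pow term
  have hvterm : ∀ x : K, v ((-1 : K) ^ m * x) = v x := by
    intro x
    rcases Nat.even_or_odd m with he | ho
    · rw [he.neg_one_pow, one_mul]
    · rw [ho.neg_one_pow, neg_one_mul, val_neg' hv0 hvmul]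
  -- bound for other subsets
  have hother : ∀ s ∈ (Finset.univ.filter
      (fun s : Finset (Fin n) => s.card = m)).erase s₀,
      ((V + r : ℚ) : WithTop ℚ) ≤ v ((-1 : K) ^ m * d s) := by
    intro s hs
    rw [Finset.mem_erase, Finset.mem_filter] at hs
    obtain ⟨hne, -, hcard⟩ := hs
    have hW : T + 1 ≤ ∑ i ∈ s, (i.1 + 1) := by
      have hge := weight_ge s hcard
      rcases Nat.lt_or_ge T (∑ i ∈ s, (i.1 + 1)) with h | h
      · omega
      · have heq : (∑ i ∈ s, (i.1 + 1)) = T := le_antisymm h hge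
        exact absurd (weight_eq_iff s hcard heq) hne
    have hWQ : (V + r : ℚ) ≤ r * ((∑ i ∈ s, (i.1 + 1) : ℕ) : ℚ) := by
      have : ((T : ℕ) : ℚ) + 1 ≤ ((∑ i ∈ s, (i.1 + 1) : ℕ) : ℚ) := by exact_mod_cast hW
      have hV' : V = r * ((T : ℕ) : ℚ) := by rw [hV, hTQ]
      rw [hV']
      nlinarith
    rw [hvterm]
    calc ((V + r : ℚ) : WithTop ℚ)
        ≤ ((r * ((∑ i ∈ s, (i.1 + 1) : ℕ) : ℚ) : ℚ) : WithTop ℚ) := by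
          exact_mod_cast hWQ
      _ ≤ v (d s) := val_det_submatrix_ge hv0 hvmul hvadd r M hcol s
  -- split the sum and conclude
  rw [← Finset.add_sum_erase _ _ hmem0]
  have hlt : v ((-1 : K) ^ m * d s₀) <
      v (∑ s ∈ (Finset.univ.filter
        (fun s : Finset (Fin n) => s.card = m)).erase s₀, (-1 : K) ^ m * d s) := by
    rw [hvterm, hval0]
    calc (V : WithTop ℚ) < ((V + r : ℚ) : WithTop ℚ) := by
          exact_mod_cast (by linarith : V < V + r)
      _ ≤ _ := val_sum_le hv0 hvmul hvadd _ _ _ hother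
  rw [val_add_eq_left hv0 hvmul hvadd _ _ hlt, hvterm, hval0]
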